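/- Existence of entanglement witnesses: Let ρ be an entangled density matrix on ℂ^{d_A} ⊗ ℂ^{d_B}. Then there exists a Hermitian matrix W indexed by Fin d_A × Fin d_B such that the (real) trace tr(Wρ) satisfies Re tr(Wρ) < 0, while Re tr(Wσ) ≥ 0 for every separable density matrix σ on ℂ^{d_A} ⊗ ℂ^{d_B}. -/

import Mathlib

open scoped BigOperators ComplexOrder

/-- The rank-one matrix `x x*`, with entries `(x x*)_{ij} = x i * conj (x j)`. -/
def vecProjector {d : ℕ} (x : Fin d → ℂ) : Matrix (Fin d) (Fin d) ℂ :=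
  fun i j => x i * (starRingEnd ℂ) (x j)

/-- A density matrix on `ℂ^{d_A} ⊗ ℂ^{d_B}` is separable if it is a finite convex combination
of Kronecker products of rank-one projectors onto unit vectors. -/
def SeparableState {dA dB : ℕ}
    (ρ : Matrix (Fin dA × Fin dB) (Fin dA × Fin dB) ℂ) : Prop :=
  ∃ (K : ℕ) (p : Fin K → ℝ) (x : Fin K → Fin dA → ℂ) (y : Fin K → Fin dB → ℂ),
    (∀ k, 0 ≤ p k) ∧ (∑ k, p k = 1) ∧
    (∀ k, ∑ a, Complex.normSq (x k a) = 1) ∧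
    (∀ k, ∑ b, Complex.normSq (y k b) = 1) ∧
    ρ = ∑ k, (p k : ℂ) •
      Matrix.kroneckerMap (· * ·) (vecProjector (x k)) (vecProjector (y k))

section Aux
open Matrix

def pureProducts (dA dB : ℕ) : Set (Matrix (Fin dA × Fin dB) (Fin dA × Fin dB) ℂ) :=
  {M | ∃ (x : Fin dA → ℂ) (y : Fin dB → ℂ),
    (∑ a, Complex.normSq (x a)) = 1 ∧ (∑ b, Complex.normSq (y b)) = 1 ∧
    M = Matrix.kroneckerMap (· * ·) (vecProjector x) (vecProjector y)}

theorem aux_real_smul {n : Type*} [Fintype n] (r : ℝ) (M : Matrix n n ℂ) :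
    (r : ℂ) • M = r • M := by
  ext i j
  simp [Matrix.smul_apply, Complex.real_smul]

theorem sep_iff_convexHull {dA dB : ℕ}
    (σ : Matrix (Fin dA × Fin dB) (Fin dA × Fin dB) ℂ) :
    SeparableState σ ↔ σ ∈ convexHull ℝ (pureProducts dA dB) := by
  constructor
  · rintro ⟨K, p, x, y, h0, h1, hx, hy, rfl⟩
    have hrw : ∀ k : Fin K, (p k : ℂ) •
        Matrix.kroneckerMap (· * ·) (vecProjector (x k)) (vecProjector (y k)) =
        p k • Matrix.kroneckerMap (· * ·) (vecProjector (x k)) (vecProjector (y k)) :=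
      fun k => aux_real_smul _ _
    rw [Finset.sum_congr rfl fun k _ => hrw k]
    exact Convex.sum_mem (convex_convexHull ℝ _) (fun k _ => h0 k) h1
      (fun k _ => subset_convexHull ℝ _ ⟨x k, y k, hx k, hy k, rfl⟩)
  · intro hσ
    rw [convexHull_eq] at hσ
    obtain ⟨ι, t, w, z, h0, h1, hz, hc⟩ := hσ
    rw [Finset.centerMass_eq_of_sum_1 _ _ h1] at hc
    set e := t.equivFin with he
    have hmem : ∀ j : {i // i ∈ t}, z (j : ι) ∈ pureProducts dA dB := fun j => hz j j.2
    choose xf yf hxf hyf hzeq using hmem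
    refine ⟨t.card, fun k => w (e.symm k : ι), fun k => xf (e.symm k), fun k => yf (e.symm k),
      fun k => h0 _ (e.symm k).2, ?_, fun k => hxf _, fun k => hyf _, ?_⟩
    · calc ∑ k : Fin t.card, w (e.symm k : ι)
          = ∑ j : {i // i ∈ t}, w (j : ι) := Equiv.sum_comp e.symm fun j => w (j : ι)
        _ = ∑ i ∈ t, w i := Finset.sum_coe_sort t w
        _ = 1 := h1
    · calc σ = ∑ i ∈ t, w i • z i := hc.symm
        _ = ∑ j : {i // i ∈ t}, w (j : ι) • z (j : ι) :=
            (Finset.sum_coe_sort t fun i => w i • z i).symm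
        _ = ∑ k : Fin t.card, w (e.symm k : ι) • z (e.symm k : ι) :=
            (Equiv.sum_comp e.symm fun j => w (j : ι) • z (j : ι)).symm
        _ = ∑ k : Fin t.card, (w (e.symm k : ι) : ℂ) •
              Matrix.kroneckerMap (· * ·) (vecProjector (xf (e.symm k)))
                (vecProjector (yf (e.symm k))) := by
            refine Finset.sum_congr rfl fun k _ => ?_
            rw [hzeq (e.symm k), aux_real_smul]

theorem aux_compact_pure (dA dB : ℕ) : IsCompact (pureProducts dA dB) := by
  classical
  have hSA : IsCompact {x : Fin dA → ℂ | ∑ a, Complex.normSq (x a) = 1} := by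
    have hcont : Continuous fun x : Fin dA → ℂ => ∑ a, Complex.normSq (x a) :=
      continuous_finset_sum _ fun a _ => Complex.continuous_normSq.comp (continuous_apply a)
    refine (isCompact_closedBall (0 : Fin dA → ℂ) 1).of_isClosed_subset
      (isClosed_eq hcont continuous_const) ?_
    intro x hx
    rw [Metric.mem_closedBall, dist_zero_right]
    refine (pi_norm_le_iff_of_nonneg zero_le_one).2 fun a => ?_
    have h1 : Complex.normSq (x a) ≤ 1 := by
      rw [← hx]
      exact Finset.single_le_sum (fun b _ => Complex.normSq_nonneg (x b)) (Finset.mem_univ a)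
    have h2 : ‖x a‖ ^ 2 ≤ 1 := by
      rw [Complex.sq_norm]; exact h1
    exact (pow_le_one_iff_of_nonneg (norm_nonneg _) two_ne_zero).1 h2
  have hSB : IsCompact {y : Fin dB → ℂ | ∑ b, Complex.normSq (y b) = 1} := by
    have hcont : Continuous fun y : Fin dB → ℂ => ∑ b, Complex.normSq (y b) :=
      continuous_finset_sum _ fun b _ => Complex.continuous_normSq.comp (continuous_apply b)
    refine (isCompact_closedBall (0 : Fin dB → ℂ) 1).of_isClosed_subset
      (isClosed_eq hcont continuous_const) ?_
    intro y hy
    rw [Metric.mem_closedBall, dist_zero_right]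
    refine (pi_norm_le_iff_of_nonneg zero_le_one).2 fun b => ?_
    have h1 : Complex.normSq (y b) ≤ 1 := by
      rw [← hy]
      exact Finset.single_le_sum (fun c _ => Complex.normSq_nonneg (y c)) (Finset.mem_univ b)
    have h2 : ‖y b‖ ^ 2 ≤ 1 := by
      rw [Complex.sq_norm]; exact h1
    exact (pow_le_one_iff_of_nonneg (norm_nonneg _) two_ne_zero).1 h2
  have himg : pureProducts dA dB =
      (fun q : (Fin dA → ℂ) × (Fin dB → ℂ) =>
        Matrix.kroneckerMap (· * ·) (vecProjector q.1) (vecProjector q.2)) ''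
      ({x | ∑ a, Complex.normSq (x a) = 1} ×ˢ {y | ∑ b, Complex.normSq (y b) = 1}) := by
    ext M
    constructor
    · rintro ⟨x, y, hx, hy, rfl⟩
      exact ⟨(x, y), ⟨hx, hy⟩, rfl⟩
    · rintro ⟨⟨x, y⟩, ⟨hx, hy⟩, rfl⟩
      exact ⟨x, y, hx, hy, rfl⟩
  rw [himg]
  refine (hSA.prod hSB).image ?_
  apply continuous_matrix
  intro i j
  show Continuous fun q : (Fin dA → ℂ) × (Fin dB → ℂ) =>
    (q.1 i.1 * (starRingEnd ℂ) (q.1 j.1)) * (q.2 i.2 * (starRingEnd ℂ) (q.2 j.2))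
  have hc : Continuous (starRingEnd ℂ) := Complex.continuous_conj
  exact (((continuous_apply i.1).comp continuous_fst).mul
      (hc.comp ((continuous_apply j.1).comp continuous_fst))).mul
    (((continuous_apply i.2).comp continuous_snd).mul
      (hc.comp ((continuous_apply j.2).comp continuous_snd)))


open scoped BigOperators ComplexOrder


-- Carathéodory: convex hull of a compact set in a finite-dimensional normed space is compact.
theorem aux_key {M : Type*} [AddCommMonoid M] {N c : ℕ} (hc : c ≤ N) (F : Fin c → M) :
    (∑ i : Fin N, (if h : (i : ℕ) < c then F ⟨i, h⟩ else 0)) = ∑ j : Fin c, F j := by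
  rw [Fin.sum_univ_eq_sum_range (fun m => if h : m < c then F ⟨m, h⟩ else 0) N]
  rw [← Finset.sum_subset (Finset.range_subset_range.2 hc)
    (by intro m _ hm; rw [Finset.mem_range] at hm; rw [dif_neg hm])]
  rw [← Fin.sum_univ_eq_sum_range (fun m => if h : m < c then F ⟨m, h⟩ else 0) c]
  exact Finset.sum_congr rfl fun j _ => by rw [dif_pos j.isLt]

theorem aux_isCompact_convexHull {E : Type*} [NormedAddCommGroup E] [NormedSpace ℝ E]
    [FiniteDimensional ℝ E] {s : Set E} (hs : IsCompact s) :
    IsCompact (convexHull ℝ s) := by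
  rcases s.eq_empty_or_nonempty with rfl | ⟨z₀, hz₀⟩
  · simp
  set N := Module.finrank ℝ E + 1 with hN
  have hmap : convexHull ℝ s =
      (fun q : (Fin N → ℝ) × (Fin N → E) => ∑ i, q.1 i • q.2 i) ''
        (stdSimplex ℝ (Fin N) ×ˢ Set.univ.pi fun _ => s) := by
    apply Set.Subset.antisymm
    · intro x hx
      rw [convexHull_eq_union] at hx
      simp only [Set.mem_iUnion] at hx
      obtain ⟨t, hts, hai, hxt⟩ := hx
      have hcard : t.card ≤ N := by
        have h1 := hai.card_le_finrank_succ
        have h2 : Module.finrank ℝ (vectorSpan ℝ (Set.range (Subtype.val : t → E))) ≤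
            Module.finrank ℝ E := Submodule.finrank_le _
        simp only [Fintype.card_coe] at h1
        omega
      rw [Finset.convexHull_eq] at hxt
      obtain ⟨w0, hw0, hw1, hwc⟩ := hxt
      rw [Finset.centerMass_eq_of_sum_1 _ _ hw1] at hwc
      set e := t.equivFin with he
      set w : Fin N → ℝ := fun i => if h : (i : ℕ) < t.card then w0 (e.symm ⟨i, h⟩ : E) else 0
        with hwdef
      set z : Fin N → E := fun i => if h : (i : ℕ) < t.card then ((e.symm ⟨i, h⟩ : t) : E) else z₀
        with hzdef
      refine ⟨(w, z), ⟨⟨fun i => ?_, ?_⟩, fun i _ => ?_⟩, ?_⟩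
      · by_cases h : (i : ℕ) < t.card
        · simp only [hwdef, dif_pos h]; exact hw0 _ (e.symm ⟨i, h⟩).2
        · simp only [hwdef, dif_neg h]; exact le_refl 0
      · have := aux_key hcard (fun j => w0 (e.symm j : E))
        calc ∑ i : Fin N, w i = ∑ j : Fin t.card, w0 (e.symm j : E) := this
          _ = ∑ y : {x // x ∈ t}, w0 (y : E) := Equiv.sum_comp e.symm fun y => w0 (y : E)
          _ = ∑ y ∈ t, w0 y := Finset.sum_coe_sort t w0
          _ = 1 := hw1
      · by_cases h : (i : ℕ) < t.card
        · simp only [hzdef, dif_pos h]; exact hts (e.symm ⟨i, h⟩).2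
        · simp only [hzdef, dif_neg h]; exact hz₀
      · have hterm : ∀ i : Fin N, w i • z i =
            (if h : (i : ℕ) < t.card then w0 (e.symm ⟨i, h⟩ : E) • ((e.symm ⟨i, h⟩ : t) : E)
              else 0) := by
          intro i
          by_cases h : (i : ℕ) < t.card
          · simp only [hwdef, hzdef, dif_pos h]
          · simp only [hwdef, hzdef, dif_neg h, zero_smul]
        calc (fun q : (Fin N → ℝ) × (Fin N → E) => ∑ i, q.1 i • q.2 i) (w, z)
            = ∑ i : Fin N, w i • z i := rfl
          _ = ∑ i : Fin N, (if h : (i : ℕ) < t.card then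
                w0 (e.symm ⟨i, h⟩ : E) • ((e.symm ⟨i, h⟩ : t) : E) else 0) :=
              Finset.sum_congr rfl fun i _ => hterm i
          _ = ∑ j : Fin t.card, w0 (e.symm j : E) • ((e.symm j : t) : E) :=
              aux_key hcard (fun j => w0 (e.symm j : E) • ((e.symm j : t) : E))
          _ = ∑ y : {x // x ∈ t}, w0 (y : E) • (y : E) :=
              Equiv.sum_comp e.symm fun y => w0 (y : E) • (y : E)
          _ = ∑ y ∈ t, w0 y • y := Finset.sum_coe_sort t fun y => w0 y • y
          _ = x := hwc
    · rintro _ ⟨⟨w, z⟩, ⟨hw, hz⟩, rfl⟩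
      exact Convex.sum_mem (convex_convexHull ℝ s) (fun i _ => hw.1 i) hw.2
        (fun i _ => subset_convexHull ℝ s (hz i trivial))
  rw [hmap]
  exact ((isCompact_stdSimplex _ _).prod (isCompact_univ_pi fun _ => hs)).image
    (continuous_finset_sum _ fun i _ =>
      ((continuous_apply i).comp continuous_fst).smul ((continuous_apply i).comp continuous_snd))

end Aux

open Matrix

variable {n : Type*} [Fintype n] [DecidableEq n]

noncomputable def witnessC (f : Matrix n n ℂ →ₗ[ℝ] ℝ) : Matrix n n ℂ :=
  fun i j => ((f (Matrix.single j i 1) : ℝ) : ℂ) -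
    Complex.I * ((f (Matrix.single j i Complex.I) : ℝ) : ℂ)

theorem trace_witnessC (f : Matrix n n ℂ →ₗ[ℝ] ℝ) (M : Matrix n n ℂ) :
    ((witnessC f * M).trace).re = f M := by
  have hdec : ∀ (i j : n), Matrix.single i j (M i j) =
      (M i j).re • Matrix.single i j (1 : ℂ) +
      (M i j).im • Matrix.single i j Complex.I := by
    intro i j
    rw [Matrix.smul_single, Matrix.smul_single, ← Matrix.single_add]
    congr 1
    simp [Complex.real_smul]
  have hf : f M = ∑ i, ∑ j, ((M i j).re * f (Matrix.single i j (1 : ℂ)) +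
      (M i j).im * f (Matrix.single i j Complex.I)) := by
    conv_lhs => rw [matrix_eq_sum_single M]
    rw [map_sum]
    refine Finset.sum_congr rfl fun i _ => ?_
    rw [map_sum]
    refine Finset.sum_congr rfl fun j _ => ?_
    rw [hdec i j, map_add, _root_.map_smul, _root_.map_smul, smul_eq_mul, smul_eq_mul]
  have htr : (witnessC f * M).trace = ∑ i, ∑ k, witnessC f i k * M k i := by
    simp [Matrix.trace, Matrix.mul_apply, Matrix.diag]
  calc ((witnessC f * M).trace).re
      = ∑ i, ∑ k, ((witnessC f i k) * M k i).re := by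
        rw [htr]; simp only [Complex.re_sum]
    _ = ∑ i, ∑ k, ((M k i).re * f (Matrix.single k i (1 : ℂ)) +
        (M k i).im * f (Matrix.single k i Complex.I)) := by
        refine Finset.sum_congr rfl fun i _ => Finset.sum_congr rfl fun k _ => ?_
        simp only [witnessC, Complex.mul_re, Complex.sub_re, Complex.sub_im, Complex.ofReal_re,
          Complex.ofReal_im, Complex.mul_im, Complex.I_re, Complex.I_im]
        ring
    _ = ∑ k, ∑ i, ((M k i).re * f (Matrix.single k i (1 : ℂ)) +
        (M k i).im * f (Matrix.single k i Complex.I)) := Finset.sum_comm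
    _ = f M := hf.symm

theorem trace_conjTranspose_re (A M : Matrix n n ℂ) (hM : M.IsHermitian) :
    ((Aᴴ * M).trace).re = ((A * M).trace).re := by
  have h : (Aᴴ * M).trace = star ((A * M).trace) := by
    calc (Aᴴ * M).trace = (Aᴴ * Mᴴ).trace := by rw [hM.eq]
      _ = ((M * A)ᴴ).trace := by rw [Matrix.conjTranspose_mul]
      _ = star ((M * A).trace) := Matrix.trace_conjTranspose _
      _ = star ((A * M).trace) := by rw [Matrix.trace_mul_comm]
  rw [h, Complex.star_def, Complex.conj_re]

/-- **Existence of entanglement witnesses.** For every entangled density matrix `ρ` on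
`ℂ^{d_A} ⊗ ℂ^{d_B}` there is a Hermitian matrix `W` with `Re tr(Wρ) < 0` while
`Re tr(Wσ) ≥ 0` for every separable density matrix `σ`. -/
theorem exists_entanglement_witness (dA dB : ℕ)
    (ρ : Matrix (Fin dA × Fin dB) (Fin dA × Fin dB) ℂ)
    (hpsd : ρ.PosSemidef) (htr : ρ.trace = 1) (hent : ¬ SeparableState ρ) :
    ∃ W : Matrix (Fin dA × Fin dB) (Fin dA × Fin dB) ℂ,
      W.IsHermitian ∧ ((W * ρ).trace).re < 0 ∧
      ∀ σ : Matrix (Fin dA × Fin dB) (Fin dA × Fin dB) ℂ,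
        σ.PosSemidef → σ.trace = 1 → SeparableState σ → 0 ≤ ((W * σ).trace).re := by
  classical
  letI : NormedAddCommGroup (Matrix (Fin dA × Fin dB) (Fin dA × Fin dB) ℂ) :=
    Matrix.normedAddCommGroup
  letI : NormedSpace ℝ (Matrix (Fin dA × Fin dB) (Fin dA × Fin dB) ℂ) := Matrix.normedSpace
  haveI : FiniteDimensional ℝ (Matrix (Fin dA × Fin dB) (Fin dA × Fin dB) ℂ) := by
    infer_instance
  haveI : LocallyConvexSpace ℝ (Matrix (Fin dA × Fin dB) (Fin dA × Fin dB) ℂ) :=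
    NormedSpace.toLocallyConvexSpace
  have hCc : IsCompact (convexHull ℝ (pureProducts dA dB)) :=
    aux_isCompact_convexHull (aux_compact_pure dA dB)
  have hnot : ρ ∉ convexHull ℝ (pureProducts dA dB) := fun h =>
    hent ((sep_iff_convexHull ρ).2 h)
  obtain ⟨f, u, hfu, hub⟩ := geometric_hahn_banach_point_closed
    (convex_convexHull ℝ _) hCc.isClosed hnot
  set C0 := witnessC (f : Matrix (Fin dA × Fin dB) (Fin dA × Fin dB) ℂ →ₗ[ℝ] ℝ) with hC0
  set W0 : Matrix (Fin dA × Fin dB) (Fin dA × Fin dB) ℂ := (2⁻¹ : ℝ) • (C0 + C0ᴴ) with hW0def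
  have hW0herm : W0.IsHermitian := by
    show W0ᴴ = W0
    rw [hW0def, Matrix.conjTranspose_smul, Matrix.conjTranspose_add,
      Matrix.conjTranspose_conjTranspose, star_trivial, add_comm]
  have hW0tr : ∀ M : Matrix (Fin dA × Fin dB) (Fin dA × Fin dB) ℂ, M.IsHermitian →
      ((W0 * M).trace).re = f M := by
    intro M hM
    have h1 : ((C0 * M).trace).re = f M := trace_witnessC _ M
    have h2 : ((C0ᴴ * M).trace).re = f M := by
      rw [trace_conjTranspose_re _ M hM]; exact h1
    have hsplit : W0 * M = (2⁻¹ : ℝ) • (C0 * M + C0ᴴ * M) := by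
      rw [hW0def, Matrix.smul_mul, Matrix.add_mul]
    rw [hsplit, Matrix.trace_smul, Matrix.trace_add, Complex.smul_re, Complex.add_re, h1, h2]
    rw [smul_eq_mul]; ring
  have hIherm : ((u : ℂ) • (1 : Matrix (Fin dA × Fin dB) (Fin dA × Fin dB) ℂ)).IsHermitian := by
    show _ = _
    rw [Matrix.conjTranspose_smul, Matrix.conjTranspose_one, Complex.star_def,
      Complex.conj_ofReal]
  refine ⟨W0 - (u : ℂ) • 1, hW0herm.sub hIherm, ?_, ?_⟩
  · have htrW : ((W0 - (u : ℂ) • 1) * ρ).trace = (W0 * ρ).trace - (u : ℂ) * ρ.trace := by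
      rw [Matrix.sub_mul, Matrix.trace_sub]
      simp [Matrix.smul_mul, smul_eq_mul]
    rw [htrW, htr, mul_one, Complex.sub_re, hW0tr ρ hpsd.1, Complex.ofReal_re]
    linarith
  · intro σ hσpsd hσtr hσsep
    have hσC := (sep_iff_convexHull σ).1 hσsep
    have hufσ := hub σ hσC
    have htrW : ((W0 - (u : ℂ) • 1) * σ).trace = (W0 * σ).trace - (u : ℂ) * σ.trace := by
      rw [Matrix.sub_mul, Matrix.trace_sub]
      simp [Matrix.smul_mul, smul_eq_mul]
    rw [htrW, hσtr, mul_one, Complex.sub_re, hW0tr σ hσpsd.1, Complex.ofReal_re]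
    linarith
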